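/- Primal–dual witness strict dual feasibility: let G_SS be an invertible s×s real matrix, G_{S^cS} a (p−s)×s real matrix, ξ_S ∈ ℝˢ, ξ_{S^c} ∈ ℝ^{p−s}, z_S ∈ ℝˢ with ‖z_S‖_∞ ≤ λ_S, and suppose the incoherence condition ‖G_{S^cS} G_SS⁻¹‖_{∞→∞} ≤ 1 − η holds for some η ∈ (0,1). Then ‖ξ_{S^c} − G_{S^cS} G_SS⁻¹ (ξ_S + z_S)‖_∞ ≤ (2 − η)·max(‖ξ_S‖_∞, ‖ξ_{S^c}‖_∞) + (1 − η)·λ_S. Consequently, if λ_{S^c} > (2 − η)·max(‖ξ_S‖_∞, ‖ξ_{S^c}‖_∞) + (1 − η)·λ_S, then ‖ξ_{S^c} − G_{S^cS} G_SS⁻¹ (ξ_S + z_S)‖_∞ < λ_{S^c}. -/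

import Mathlib

open Matrix

/-- The ℓ∞→ℓ∞ operator norm of a real matrix: the maximum absolute row sum. -/
noncomputable def rowSumNorm {m n : ℕ} (M : Matrix (Fin m) (Fin n) ℝ) : ℝ :=
  ⨆ i, ∑ j, |M i j|

lemma rowSum_le_rowSumNorm {m n : ℕ} (M : Matrix (Fin m) (Fin n) ℝ) (i : Fin m) :
    ∑ j, |M i j| ≤ rowSumNorm M :=
  le_ciSup (f := fun i => ∑ j, |M i j|) (Set.Finite.bddAbove (Set.finite_range _)) i

lemma mulVec_norm_le {m n : ℕ} (M : Matrix (Fin m) (Fin n) ℝ) (v : Fin n → ℝ)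
    (hm : 0 < m) : ‖M *ᵥ v‖ ≤ rowSumNorm M * ‖v‖ := by
  have hR : 0 ≤ rowSumNorm M := by
    have := rowSum_le_rowSumNorm M ⟨0, hm⟩
    exact le_trans (Finset.sum_nonneg fun j _ => abs_nonneg _) this
  rw [pi_norm_le_iff_of_nonneg (by positivity)]
  intro i
  calc ‖(M *ᵥ v) i‖ = |∑ j, M i j * v j| := by rfl
    _ ≤ ∑ j, |M i j * v j| := Finset.abs_sum_le_sum_abs _ _
    _ ≤ ∑ j, |M i j| * ‖v‖ := by
        refine Finset.sum_le_sum fun j _ => ?_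
        rw [abs_mul]
        exact mul_le_mul_of_nonneg_left (norm_le_pi_norm v j) (abs_nonneg _)
    _ = (∑ j, |M i j|) * ‖v‖ := (Finset.sum_mul _ _ _).symm
    _ ≤ rowSumNorm M * ‖v‖ :=
        mul_le_mul_of_nonneg_right (rowSum_le_rowSumNorm M i) (norm_nonneg v)

theorem pdw_strict_dual_feasibility (p s : ℕ) (hs : 0 < s) (hsp : s < p)
    (GSS : Matrix (Fin s) (Fin s) ℝ) (hGSS : IsUnit GSS.det)
    (GScS : Matrix (Fin (p - s)) (Fin s) ℝ)
    (ξS zS : Fin s → ℝ) (ξSc : Fin (p - s) → ℝ)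
    (lamS lamSc η : ℝ) (hlamS : 0 ≤ lamS) (hlamSc : 0 < lamSc)
    (hη : η ∈ Set.Ioo (0 : ℝ) 1)
    (hz : ‖zS‖ ≤ lamS)
    (hincoh : rowSumNorm (GScS * GSS⁻¹) ≤ 1 - η) :
    ‖ξSc - GScS *ᵥ (GSS⁻¹ *ᵥ (ξS + zS))‖ ≤
        (2 - η) * max ‖ξS‖ ‖ξSc‖ + (1 - η) * lamS ∧
      ((2 - η) * max ‖ξS‖ ‖ξSc‖ + (1 - η) * lamS < lamSc →
        ‖ξSc - GScS *ᵥ (GSS⁻¹ *ᵥ (ξS + zS))‖ < lamSc) := by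
  have hps : 0 < p - s := Nat.sub_pos_of_lt hsp
  have hMv : GScS *ᵥ (GSS⁻¹ *ᵥ (ξS + zS)) = (GScS * GSS⁻¹) *ᵥ (ξS + zS) :=
    mulVec_mulVec _ _ _
  have h1η : (0:ℝ) ≤ 1 - η := le_of_lt (sub_pos.mpr hη.2)
  have key : ‖ξSc - GScS *ᵥ (GSS⁻¹ *ᵥ (ξS + zS))‖ ≤
      (2 - η) * max ‖ξS‖ ‖ξSc‖ + (1 - η) * lamS := by
    calc ‖ξSc - GScS *ᵥ (GSS⁻¹ *ᵥ (ξS + zS))‖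
        ≤ ‖ξSc‖ + ‖(GScS * GSS⁻¹) *ᵥ (ξS + zS)‖ := by
          rw [hMv]; exact norm_sub_le _ _
      _ ≤ ‖ξSc‖ + rowSumNorm (GScS * GSS⁻¹) * ‖ξS + zS‖ :=
          add_le_add (le_refl _) (mulVec_norm_le _ _ hps)
      _ ≤ ‖ξSc‖ + (1 - η) * (‖ξS‖ + ‖zS‖) :=
          add_le_add (le_refl _) (mul_le_mul hincoh (norm_add_le _ _) (norm_nonneg _) h1η)
      _ ≤ max ‖ξS‖ ‖ξSc‖ + (1 - η) * (max ‖ξS‖ ‖ξSc‖ + lamS) := by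
          gcongr
          · exact le_max_right _ _
          · exact le_max_left _ _
      _ = (2 - η) * max ‖ξS‖ ‖ξSc‖ + (1 - η) * lamS := by ring
  exact ⟨key, fun h => lt_of_le_of_lt key h⟩
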